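/- A function g : F_2^n → F_2 is c-bent₄ if and only if for every nonzero z ∈ F_2^n the Boolean function x ↦ g(x) + g(x+z) + c·(z⊙x) is balanced, i.e., takes each of the values 0 and 1 exactly 2^{n−1} times. -/

import Mathlib

open Finset

noncomputable section

/-- Dot product on `F_2^n`. -/
def dotp {n : ℕ} (x y : Fin n → ZMod 2) : ZMod 2 := ∑ i, x i * y i

/-- Coordinatewise product on `F_2^n`. -/
def odot {n : ℕ} (x y : Fin n → ZMod 2) : Fin n → ZMod 2 := fun i => x i * y i

/-- Hamming weight of `z ∈ F_2^n`. -/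
def wt {n : ℕ} (z : Fin n → ZMod 2) : ℕ := ∑ i, (z i).val

/-- The unitary transform `U_g^c(u) = Σ_x (−1)^{g(x)+u·x} · i^{wt(c⊙x)}`. -/
def U {n : ℕ} (g : (Fin n → ZMod 2) → ZMod 2) (c u : Fin n → ZMod 2) : ℂ :=
  ∑ x : Fin n → ZMod 2, (-1 : ℂ) ^ (g x + dotp u x).val * Complex.I ^ wt (odot c x)

/-- `g` is `c`-bent₄ if `U_g^c` has a flat spectrum. -/
def IsCBent4 {n : ℕ} (g : (Fin n → ZMod 2) → ZMod 2) (c : Fin n → ZMod 2) : Prop :=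
  ∀ u : Fin n → ZMod 2, ‖U g c u‖ = (2 : ℝ) ^ ((n : ℝ) / 2)

namespace CB4

/-- The sign character of `F_2`. -/
def ch (a : ZMod 2) : ℂ := (-1) ^ a.val

lemma zmod2_cases : ∀ a : ZMod 2, a = 0 ∨ a = 1 := by decide

lemma ch_zero : ch 0 = 1 := by simp [ch]

lemma ch_one : ch 1 = -1 := by simp [ch, ZMod.val_one]

lemma ch_add (a b : ZMod 2) : ch (a + b) = ch a * ch b := by
  rcases zmod2_cases a with h|h <;> rcases zmod2_cases b with h'|h' <;>
    subst h <;> subst h' <;>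
    norm_num [ch, show (1+1 : ZMod 2) = 0 from rfl,
      show (2 : ZMod 2) = 0 from rfl, show ZMod.val (2 : ZMod 2) = 0 from rfl,
      ZMod.val_one, Complex.I_mul_I]

lemma ch_sum {ι : Type*} (s : Finset ι) (f : ι → ZMod 2) :
    ch (∑ i ∈ s, f i) = ∏ i ∈ s, ch (f i) := by
  induction s using Finset.cons_induction with
  | empty => simp [ch]
  | cons a s ha ih => simp [Finset.sum_cons, Finset.prod_cons, ch_add, ih]

lemma add_self_zmod (a : ZMod 2) : a + a = 0 := by
  have : ∀ b : ZMod 2, b + b = 0 := by decide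
  exact this a

variable {n : ℕ}

lemma dotp_add_right (u x y : Fin n → ZMod 2) :
    dotp u (x + y) = dotp u x + dotp u y := by
  simp [dotp, Pi.add_apply, mul_add, Finset.sum_add_distrib]

lemma dotp_add_left (x y u : Fin n → ZMod 2) :
    dotp (x + y) u = dotp x u + dotp y u := by
  simp [dotp, Pi.add_apply, add_mul, Finset.sum_add_distrib]

lemma dotp_zero_right (u : Fin n → ZMod 2) : dotp u 0 = 0 := by simp [dotp]

lemma key1 (a b d : ZMod 2) :
    (Complex.I) ^ (a*b).val * (-Complex.I) ^ (a*(b+d)).val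
      = (-Complex.I) ^ (a*d).val * ch (a*(d*b)) := by
  rcases zmod2_cases a with h|h <;> rcases zmod2_cases b with h'|h' <;>
    rcases zmod2_cases d with h''|h'' <;> subst h <;> subst h' <;> subst h'' <;>
    norm_num [ch, show (1+1 : ZMod 2) = 0 from rfl,
      show (2 : ZMod 2) = 0 from rfl, show ZMod.val (2 : ZMod 2) = 0 from rfl,
      ZMod.val_one, Complex.I_mul_I]

lemma weight_key (c z x : Fin n → ZMod 2) :
    Complex.I ^ wt (odot c x) * (-Complex.I) ^ wt (odot c (x + z))
      = (-Complex.I) ^ wt (odot c z) * ch (dotp c (odot z x)) := by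
  simp only [wt, odot, dotp, ch_sum, Pi.add_apply, ← Finset.prod_pow_eq_pow_sum,
    ← Finset.prod_mul_distrib]
  exact Finset.prod_congr rfl fun i _ => key1 (c i) (x i) (z i)

/-- The autocorrelation-type sum. -/
def Af (g : (Fin n → ZMod 2) → ZMod 2) (c z : Fin n → ZMod 2) : ℂ :=
  ∑ x : Fin n → ZMod 2, ch (g x + g (x + z) + dotp c (odot z x))

lemma conj_U (g : (Fin n → ZMod 2) → ZMod 2) (c u : Fin n → ZMod 2) :
    (starRingEnd ℂ) (U g c u)
      = ∑ y : Fin n → ZMod 2, ch (g y + dotp u y) * (-Complex.I) ^ wt (odot c y) := by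
  simp [U, ch, map_sum, map_mul, map_pow, Complex.conj_I]

lemma UU (g : (Fin n → ZMod 2) → ZMod 2) (c u : Fin n → ZMod 2) :
    U g c u * (starRingEnd ℂ) (U g c u)
      = ∑ z : Fin n → ZMod 2, ch (dotp u z) * (-Complex.I) ^ wt (odot c z) * Af g c z := by
  rw [conj_U]
  have hU : U g c u = ∑ x : Fin n → ZMod 2, ch (g x + dotp u x) * Complex.I ^ wt (odot c x) := rfl
  rw [hU, Finset.sum_mul_sum]
  have step : ∀ x : Fin n → ZMod 2,
      (∑ y : Fin n → ZMod 2, (ch (g x + dotp u x) * Complex.I ^ wt (odot c x)) *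
        (ch (g y + dotp u y) * (-Complex.I) ^ wt (odot c y)))
      = ∑ z : Fin n → ZMod 2, ch (dotp u z) * (-Complex.I) ^ wt (odot c z) *
          ch (g x + g (x + z) + dotp c (odot z x)) := by
    intro x
    rw [← Equiv.sum_comp (Equiv.addLeft x) (fun y =>
      (ch (g x + dotp u x) * Complex.I ^ wt (odot c x)) *
        (ch (g y + dotp u y) * (-Complex.I) ^ wt (odot c y)))]
    refine Finset.sum_congr rfl fun z _ => ?_
    have hxz : (Equiv.addLeft x) z = x + z := rfl
    rw [hxz]
    have hdu : dotp u (x + z) = dotp u x + dotp u z := dotp_add_right u x z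
    rw [hdu]
    simp only [ch_add]
    have hw := weight_key c z x
    have hsq : ch (dotp u x) * ch (dotp u x) = 1 := by
      rw [← ch_add, add_self_zmod, ch_zero]
    calc (ch (g x) * ch (dotp u x) * Complex.I ^ wt (odot c x)) *
          (ch (g (x+z)) * (ch (dotp u x) * ch (dotp u z)) * (-Complex.I) ^ wt (odot c (x+z)))
        = (ch (dotp u x) * ch (dotp u x)) * ch (dotp u z) * ch (g x) * ch (g (x+z)) *
            (Complex.I ^ wt (odot c x) * (-Complex.I) ^ wt (odot c (x + z))) := by ring
      _ = ch (dotp u z) * (-Complex.I) ^ wt (odot c z) *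
            (ch (g x) * ch (g (x+z)) * ch (dotp c (odot z x))) := by
            rw [hsq, hw]; ring
      _ = _ := by rw [← ch_add, ← ch_add]
  calc ∑ x : Fin n → ZMod 2, ∑ y : Fin n → ZMod 2,
        (ch (g x + dotp u x) * Complex.I ^ wt (odot c x)) *
          (ch (g y + dotp u y) * (-Complex.I) ^ wt (odot c y))
      = ∑ x : Fin n → ZMod 2, ∑ z : Fin n → ZMod 2,
          ch (dotp u z) * (-Complex.I) ^ wt (odot c z) *
            ch (g x + g (x + z) + dotp c (odot z x)) := by
        exact Finset.sum_congr rfl fun x _ => step x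
    _ = ∑ z : Fin n → ZMod 2, ∑ x : Fin n → ZMod 2,
          ch (dotp u z) * (-Complex.I) ^ wt (odot c z) *
            ch (g x + g (x + z) + dotp c (odot z x)) := Finset.sum_comm
    _ = _ := by
        refine Finset.sum_congr rfl fun z _ => ?_
        rw [Af, Finset.mul_sum]

lemma card_V : Fintype.card (Fin n → ZMod 2) = 2 ^ n := by
  simp [ZMod.card]

lemma sum_ch_dotp (w : Fin n → ZMod 2) :
    ∑ u : Fin n → ZMod 2, ch (dotp u w) = if w = 0 then (2 : ℂ) ^ n else 0 := by
  by_cases hw : w = 0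
  · subst hw
    simp only [if_pos rfl]
    have : ∀ u : Fin n → ZMod 2, dotp u (0 : Fin n → ZMod 2) = 0 := by
      intro u; simp [dotp]
    simp only [this, ch_zero, Finset.sum_const, Finset.card_univ, card_V, nsmul_eq_mul]
    push_cast; ring
  · rw [if_neg hw]
    obtain ⟨i, hi⟩ : ∃ i, w i ≠ 0 := by
      by_contra h
      push_neg at h
      exact hw (funext fun i => h i)
    have hwi : w i = 1 := by
      have : ∀ a : ZMod 2, a ≠ 0 → a = 1 := by decide
      exact this _ hi
    set δ : Fin n → ZMod 2 := Pi.single i 1 with hδ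
    have hδw : dotp δ w = 1 := by
      rw [dotp]
      rw [Finset.sum_eq_single i]
      · simp [hδ, hwi]
      · intro j _ hj; simp [hδ, Pi.single_eq_of_ne hj]
      · intro h; exact absurd (Finset.mem_univ i) h
    have key : ∑ u : Fin n → ZMod 2, ch (dotp u w)
        = ∑ u : Fin n → ZMod 2, ch (dotp (δ + u) w) := by
      exact (Equiv.sum_comp (Equiv.addLeft δ) (fun u => ch (dotp u w))).symm
    have h1 : ∑ u : Fin n → ZMod 2, ch (dotp (δ + u) w)
        = - ∑ u : Fin n → ZMod 2, ch (dotp u w) := by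
      rw [← Finset.sum_neg_distrib]
      refine Finset.sum_congr rfl fun u _ => ?_
      rw [dotp_add_left, ch_add, hδw, ch_one]; ring
    have h2 : ∑ u : Fin n → ZMod 2, ch (dotp u w)
        = - ∑ u : Fin n → ZMod 2, ch (dotp u w) := key.trans h1
    linear_combination h2 / 2

lemma ch_eq_ite (a : ZMod 2) : ch a = if a = 0 then 1 else -1 := by
  rcases zmod2_cases a with h | h <;> subst h <;> simp [ch_zero, ch_one]

lemma sum_ch_counts (f : (Fin n → ZMod 2) → ZMod 2) :
    ∑ x : Fin n → ZMod 2, ch (f x)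
      = ((Finset.univ.filter (fun x => f x = 0)).card : ℂ)
        - ((Finset.univ.filter (fun x => f x = 1)).card : ℂ) := by
  have h1 : (Finset.univ.filter (fun x : Fin n → ZMod 2 => f x = 1))
      = Finset.univ.filter (fun x => ¬ f x = 0) := by
    apply Finset.filter_congr
    intro x _
    have : ∀ b : ZMod 2, (b = 1 ↔ ¬ b = 0) := by decide
    simpa using this (f x)
  rw [h1]
  simp only [ch_eq_ite]
  rw [Finset.sum_ite, Finset.sum_const, Finset.sum_const]
  simp [sub_eq_add_neg]

lemma filter_card_sum (f : (Fin n → ZMod 2) → ZMod 2) :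
    (Finset.univ.filter (fun x => f x = 0)).card
      + (Finset.univ.filter (fun x => f x = 1)).card = 2 ^ n := by
  have h1 : (Finset.univ.filter (fun x : Fin n → ZMod 2 => f x = 1))
      = Finset.univ.filter (fun x => ¬ f x = 0) := by
    apply Finset.filter_congr
    intro x _
    have : ∀ b : ZMod 2, (b = 1 ↔ ¬ b = 0) := by decide
    simpa using this (f x)
  rw [h1, Finset.card_filter_add_card_filter_not, Finset.card_univ, card_V]

lemma wt_odot_zero (c : Fin n → ZMod 2) : wt (odot c 0) = 0 := by
  simp [wt, odot]

lemma Af_zero (g : (Fin n → ZMod 2) → ZMod 2) (c : Fin n → ZMod 2) :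
    Af g c 0 = (2 : ℂ) ^ n := by
  rw [Af]
  have h : ∀ x : Fin n → ZMod 2,
      g x + g (x + 0) + dotp c (odot (0 : Fin n → ZMod 2) x) = 0 := by
    intro x
    have h1 : odot (0 : Fin n → ZMod 2) x = 0 := by funext i; simp [odot]
    rw [add_zero, h1, dotp_zero_right, add_zero, add_self_zmod]
  simp only [h, ch_zero, Finset.sum_const, Finset.card_univ, card_V, nsmul_eq_mul]
  push_cast; ring

lemma rp : ((2 : ℝ) ^ ((n : ℝ) / 2)) ^ 2 = 2 ^ n := by
  rw [← Real.rpow_natCast ((2 : ℝ) ^ ((n : ℝ) / 2)) 2, ← Real.rpow_mul (by norm_num)]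
  rw [show ((n : ℝ) / 2 * ((2 : ℕ) : ℝ)) = (n : ℝ) by push_cast; ring, Real.rpow_natCast]

/-- The balancedness condition at `z` implies `Af g c z = 0`. -/
lemma Af_eq_zero_of_balanced (g : (Fin n → ZMod 2) → ZMod 2) (c z : Fin n → ZMod 2)
    (h0 : (Finset.univ.filter
        (fun x : Fin n → ZMod 2 => g x + g (x + z) + dotp c (odot z x) = 0)).card = 2 ^ (n-1))
    (h1 : (Finset.univ.filter
        (fun x : Fin n → ZMod 2 => g x + g (x + z) + dotp c (odot z x) = 1)).card = 2 ^ (n-1)) :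
    Af g c z = 0 := by
  rw [Af, sum_ch_counts, h0, h1, sub_self]

theorem main (g : (Fin n → ZMod 2) → ZMod 2) (c : Fin n → ZMod 2) :
    IsCBent4 g c ↔
      ∀ z : Fin n → ZMod 2, z ≠ 0 → ∀ b : ZMod 2,
        (Finset.univ.filter
          (fun x : Fin n → ZMod 2 => g x + g (x + z) + dotp c (odot z x) = b)).card
          = 2 ^ (n - 1) := by
  constructor
  · intro h z hz b
    -- from flat spectrum derive U * conj U = 2^n for all u
    have hflat : ∀ u : Fin n → ZMod 2,
        U g c u * (starRingEnd ℂ) (U g c u) = (2 : ℂ) ^ n := by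
      intro u
      rw [Complex.mul_conj]
      have : Complex.normSq (U g c u) = 2 ^ n := by
        rw [← Complex.sq_norm, h u, rp]
      rw [this]
      push_cast; ring
    -- rewrite via UU
    have hsum : ∀ u : Fin n → ZMod 2,
        ∑ w : Fin n → ZMod 2, ch (dotp u w) * (-Complex.I) ^ wt (odot c w) * Af g c w
          = (2 : ℂ) ^ n := fun u => (UU g c u).symm.trans (hflat u)
    -- the modified coefficients
    set D : (Fin n → ZMod 2) → ℂ :=
      fun w => if w = 0 then 0 else (-Complex.I) ^ wt (odot c w) * Af g c w with hD
    have hterm : ∀ u w : Fin n → ZMod 2,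
        ch (dotp u w) * (-Complex.I) ^ wt (odot c w) * Af g c w
          = ch (dotp u w) * D w + (if w = 0 then (2 : ℂ) ^ n else 0) := by
      intro u w
      by_cases hw : w = 0
      · subst hw
        simp [hD, dotp_zero_right, ch_zero, wt_odot_zero, Af_zero]
      · simp [hD, hw, mul_assoc]
    have hDsum : ∀ u : Fin n → ZMod 2,
        ∑ w : Fin n → ZMod 2, ch (dotp u w) * D w = 0 := by
      intro u
      have := hsum u
      rw [Finset.sum_congr rfl (fun w _ => hterm u w), Finset.sum_add_distrib,
        Finset.sum_ite_eq' Finset.univ (0 : Fin n → ZMod 2) (fun _ => (2 : ℂ) ^ n)] at this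
      simp only [Finset.mem_univ, if_pos] at this
      linear_combination this
    -- Fourier inversion gives D z = 0
    have step1 : ∀ u : Fin n → ZMod 2,
        ch (dotp u z) * (∑ w : Fin n → ZMod 2, ch (dotp u w) * D w)
          = ∑ w : Fin n → ZMod 2, ch (dotp u (z + w)) * D w := by
      intro u
      rw [Finset.mul_sum]
      refine Finset.sum_congr rfl fun w _ => ?_
      rw [dotp_add_right, ch_add]; ring
    have hinv : ∑ w : Fin n → ZMod 2,
        (∑ u : Fin n → ZMod 2, ch (dotp u (z + w))) * D w = 0 := by
      calc ∑ w : Fin n → ZMod 2, (∑ u : Fin n → ZMod 2, ch (dotp u (z + w))) * D w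
          = ∑ w : Fin n → ZMod 2, ∑ u : Fin n → ZMod 2, ch (dotp u (z + w)) * D w := by
            refine Finset.sum_congr rfl fun w _ => ?_; rw [Finset.sum_mul]
        _ = ∑ u : Fin n → ZMod 2, ∑ w : Fin n → ZMod 2, ch (dotp u (z + w)) * D w :=
            Finset.sum_comm
        _ = ∑ u : Fin n → ZMod 2,
              ch (dotp u z) * (∑ w : Fin n → ZMod 2, ch (dotp u w) * D w) :=
            Finset.sum_congr rfl fun u _ => (step1 u).symm
        _ = 0 := by simp [hDsum]
    have hneg : ∀ a : ZMod 2, -a = a := by decide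
    have hcond : ∀ w : Fin n → ZMod 2, (z + w = 0) ↔ w = z := by
      intro w
      constructor
      · intro hw
        funext i
        have h0 := congrFun hw i
        have : ∀ a b : ZMod 2, a + b = 0 → b = a := by decide
        exact this (z i) (w i) h0
      · intro hw
        rw [hw]
        funext i
        exact add_self_zmod (z i)
    have hDz0 : (2 : ℂ) ^ n * D z = 0 := by
      have h3 : ∑ w : Fin n → ZMod 2, (if w = z then (2 : ℂ) ^ n else 0) * D w = 0 := by
        calc ∑ w : Fin n → ZMod 2, (if w = z then (2 : ℂ) ^ n else 0) * D w
            = ∑ w : Fin n → ZMod 2, (∑ u : Fin n → ZMod 2, ch (dotp u (z + w))) * D w := by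
              refine Finset.sum_congr rfl fun w _ => ?_
              rw [sum_ch_dotp, if_congr (hcond w) rfl rfl]
          _ = 0 := hinv
      simp only [ite_mul, zero_mul] at h3
      rwa [Finset.sum_ite_eq' Finset.univ z (fun w => (2 : ℂ) ^ n * D w),
        if_pos (Finset.mem_univ z)] at h3
    have hDz : D z = 0 := by
      have h2 : (2 : ℂ) ^ n ≠ 0 := pow_ne_zero _ two_ne_zero
      exact (mul_eq_zero.mp hDz0).resolve_left h2
    have hAf : Af g c z = 0 := by
      rw [hD] at hDz
      simp only [if_neg hz] at hDz
      have hI : (-Complex.I) ^ wt (odot c z) ≠ 0 :=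
        pow_ne_zero _ (neg_ne_zero.mpr Complex.I_ne_zero)
      exact (mul_eq_zero.mp hDz).resolve_left hI
    -- turn Af = 0 into the balancedness statement
    rw [Af, sum_ch_counts] at hAf
    have hNN : (Finset.univ.filter
          (fun x : Fin n → ZMod 2 => g x + g (x + z) + dotp c (odot z x) = 0)).card
        = (Finset.univ.filter
          (fun x : Fin n → ZMod 2 => g x + g (x + z) + dotp c (odot z x) = 1)).card := by
      have : ((Finset.univ.filter
          (fun x : Fin n → ZMod 2 => g x + g (x + z) + dotp c (odot z x) = 0)).card : ℂ)
        = ((Finset.univ.filter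
          (fun x : Fin n → ZMod 2 => g x + g (x + z) + dotp c (odot z x) = 1)).card : ℂ) := by
        linear_combination hAf
      exact_mod_cast this
    have hsum2 := filter_card_sum (fun x => g x + g (x + z) + dotp c (odot z x))
    have hn : 1 ≤ n := by
      rcases Nat.eq_zero_or_pos n with h0 | h0
      · subst h0
        exact absurd (funext fun i => i.elim0) hz
      · exact h0
    have h2n : 2 ^ n = 2 ^ (n - 1) + 2 ^ (n - 1) := by
      obtain ⟨m, hm⟩ : ∃ m, n = m + 1 := ⟨n - 1, by omega⟩
      subst hm
      simp only [Nat.add_sub_cancel, pow_succ]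
      ring
    rcases zmod2_cases b with hb | hb <;> subst hb <;> omega
  · intro hbal u
    have hAz : ∀ w : Fin n → ZMod 2, w ≠ 0 → Af g c w = 0 := fun w hw =>
      Af_eq_zero_of_balanced g c w (hbal w hw 0) (hbal w hw 1)
    have hmc : U g c u * (starRingEnd ℂ) (U g c u) = (2 : ℂ) ^ n := by
      rw [UU, Finset.sum_eq_single (0 : Fin n → ZMod 2)]
      · rw [dotp_zero_right, ch_zero, wt_odot_zero, Af_zero]; ring
      · intro w _ hw
        rw [hAz w hw, mul_zero]
      · intro h0
        exact absurd (Finset.mem_univ _) h0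
    rw [Complex.mul_conj] at hmc
    have hns : Complex.normSq (U g c u) = 2 ^ n := by exact_mod_cast hmc
    rw [Complex.norm_def, hns, ← rp, Real.sqrt_sq (by positivity)]

end CB4

/-- `g` is `c`-bent₄ iff for every nonzero `z` the function
`x ↦ g(x) + g(x+z) + c·(z⊙x)` is balanced. -/
theorem cBent4_iff_balanced {n : ℕ} (g : (Fin n → ZMod 2) → ZMod 2)
    (c : Fin n → ZMod 2) :
    IsCBent4 g c ↔
      ∀ z : Fin n → ZMod 2, z ≠ 0 → ∀ b : ZMod 2,
        (Finset.univ.filter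
          (fun x : Fin n → ZMod 2 => g x + g (x + z) + dotp c (odot z x) = b)).card
          = 2 ^ (n - 1) := by
  exact CB4.main g c
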